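/- arXiv:2401.10818 — 2 statements merged into one kernel-verified Lean document; each statement's English description precedes it below -/
import Mathlib

section
/- Let α > 0, λ > 0, and let n ≥ 1 be an integer. Let m ≥ 2 be an integer with m ≤ (2λn)^{−1/α}. Then for the clique infection chain on {0,…,n} started at X₀ = 1, the probability that the chain reaches the state m before reaching the state 0 is at most 2^{1−m}. -/
open scoped ENNReal
open Filter Asymptotics

noncomputable def markovDist {S : Type*} [DecidableEq S] (step : S → S → ℝ≥0∞) (s0 : S) :
    ℕ → S → ℝ≥0∞
  | 0 => fun J => if J = s0 then 1 else 0
  | t + 1 => fun J => ∑' s : S, markovDist step s0 t s * step s J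

open Classical in
noncomputable def absorbStep {S : Type*} (A : Set S) (step : S → S → ℝ≥0∞) :
    S → S → ℝ≥0∞ :=
  fun s => if s ∈ A then (fun J => if J = s then 1 else 0) else step s

noncomputable def hitProb {S : Type*} [DecidableEq S] (step : S → S → ℝ≥0∞) (s0 : S)
    (A : Set S) : ℝ≥0∞ :=
  ⨆ t : ℕ, ∑' s : S, A.indicator (markovDist (absorbStep A step) s0 t) s

noncomputable def cliqueStep (n : ℕ) (lam alpha : ℝ) (I : ℕ) : ℕ → ℝ≥0∞ :=
  if I = 0 ∨ n < I then fun J => if J = I then 1 else 0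
  else fun J =>
    if J = I + 1 then
      ENNReal.ofReal (lam * (I : ℝ) ^ (1 + alpha) * ((n : ℝ) - I) /
        (lam * (I : ℝ) ^ (1 + alpha) * ((n : ℝ) - I) + I))
    else if J = I - 1 then
      ENNReal.ofReal ((I : ℝ) /
        (lam * (I : ℝ) ^ (1 + alpha) * ((n : ℝ) - I) + I))
    else 0

noncomputable def cliqueDist (n : ℕ) (lam alpha : ℝ) (x0 : ℕ) : ℕ → ℕ → ℝ≥0∞ :=
  markovDist (cliqueStep n lam alpha) x0

noncomputable def cliqueET (n : ℕ) (lam alpha : ℝ) (x0 : ℕ) : ℝ≥0∞ :=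
  ∑' t : ℕ, (1 - cliqueDist n lam alpha x0 t 0)

private lemma tsum_point (a : ℕ) (f : ℕ → ℝ≥0∞) [inst : ∀ J : ℕ, Decidable (J = a)] :
    ∑' J : ℕ, (if J = a then (1 : ℝ≥0∞) else 0) * f J = f a := by
  rw [tsum_eq_single a (by intro b hb; simp [hb])]
  simp

private lemma tsum_two_point {p q : ℝ≥0∞} {a b : ℕ} (hab : a ≠ b) (f : ℕ → ℝ≥0∞) :
    ∑' J : ℕ, (if J = a then p else if J = b then q else 0) * f J = p * f a + q * f b := by
  have h : ∀ J : ℕ, (if J = a then p else if J = b then q else 0) * f J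
      = (if J = a then p * f a else 0) + (if J = b then q * f b else 0) := by
    intro J
    by_cases h1 : J = a
    · subst h1; simp [hab, Ne.symm hab]
    · by_cases h2 : J = b <;> simp [h1, h2, Ne.symm hab]
  rw [tsum_congr h, ENNReal.tsum_add, tsum_ite_eq, tsum_ite_eq]

private lemma dist_superm (step : ℕ → ℕ → ℝ≥0∞) (g : ℕ → ℝ≥0∞)
    (h : ∀ s, ∑' J : ℕ, step s J * g J ≤ g s) (s0 : ℕ) :
    ∀ t : ℕ, ∑' s : ℕ, markovDist step s0 t s * g s ≤ g s0
  | 0 => by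
      rw [show markovDist step s0 0 = fun J => if J = s0 then 1 else 0 from rfl, tsum_point]
  | (t + 1) => by
      have IH := dist_superm step g h s0 t
      calc ∑' J : ℕ, markovDist step s0 (t + 1) J * g J
          = ∑' J : ℕ, ∑' s : ℕ, markovDist step s0 t s * step s J * g J := by
            refine tsum_congr fun J => ?_
            rw [show markovDist step s0 (t + 1) J
                = ∑' s : ℕ, markovDist step s0 t s * step s J from rfl,
              ENNReal.tsum_mul_right]
        _ = ∑' s : ℕ, ∑' J : ℕ, markovDist step s0 t s * step s J * g J := ENNReal.tsum_comm
        _ = ∑' s : ℕ, markovDist step s0 t s * ∑' J : ℕ, step s J * g J := by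
            refine tsum_congr fun s => ?_
            rw [← ENNReal.tsum_mul_left]
            exact tsum_congr fun J => (mul_assoc _ _ _)
        _ ≤ ∑' s : ℕ, markovDist step s0 t s * g s :=
            ENNReal.tsum_le_tsum fun s => mul_le_mul_right (h s) _
        _ ≤ g s0 := IH

private lemma step_superm (n m : ℕ) (lam alpha : ℝ) (hn : 1 ≤ n) (hm : 2 ≤ m)
    (hlam : 0 < lam) (ha : 0 < alpha)
    (hmle : (m : ℝ) ≤ (2 * lam * n) ^ (-1 / alpha)) (s : ℕ) :
    ∑' J : ℕ, absorbStep {m} (cliqueStep n lam alpha) s J * ((2 : ℝ≥0∞) ^ (min J m)) ≤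
      (2 : ℝ≥0∞) ^ (min s m) := by
  classical
  by_cases hsm : s = m
  · rw [absorbStep, if_pos (by simp [hsm])]
    exact le_of_eq (by rw [tsum_eq_single s (by intro c hc; simp [hc])]; simp)
  · rw [absorbStep, if_neg (by simp [hsm])]
    rw [cliqueStep]
    by_cases h0 : s = 0 ∨ n < s
    · rw [if_pos h0]
      exact le_of_eq (by rw [tsum_eq_single s (by intro c hc; simp [hc])]; simp)
    · rw [if_neg h0]
      push_neg at h0
      obtain ⟨hs1, hsn⟩ := h0
      have hs0 : 0 < s := Nat.pos_of_ne_zero hs1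
      have hsr : (0 : ℝ) < (s : ℝ) := by exact_mod_cast hs0
      set b : ℝ := lam * (s : ℝ) ^ (1 + alpha) * ((n : ℝ) - s) with hbdef
      have hns : (s : ℝ) ≤ (n : ℝ) := by exact_mod_cast hsn
      have hbnn : 0 ≤ b := by
        apply mul_nonneg (mul_nonneg hlam.le (Real.rpow_nonneg hsr.le _))
        linarith
      have hd : 0 < b + s := by linarith
      rw [tsum_two_point (by omega)]
      have hsum : ENNReal.ofReal (b / (b + s)) + ENNReal.ofReal ((s : ℝ) / (b + s)) = 1 := by
        rw [← ENNReal.ofReal_add (by positivity) (by positivity), ← add_div,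
          div_self hd.ne']
        simp
      rcases Nat.lt_or_ge s m with hlt | hge
      · -- s < m : true supermartingale step, needs p ≤ 1/3
        have hmin1 : min (s + 1) m = s + 1 := by omega
        have hmin2 : min (s - 1) m = s - 1 := by omega
        have hmin3 : min s m = s := by omega
        rw [hmin1, hmin2, hmin3]
        -- key real inequality: 2 b ≤ s
        have hc : (0 : ℝ) < 2 * lam * n := by
          have : (1 : ℝ) ≤ (n : ℝ) := by exact_mod_cast hn
          positivity
        have hkey : 2 * lam * (n : ℝ) * (m : ℝ) ^ alpha ≤ 1 := by
          have h1 : (m : ℝ) ^ alpha ≤ ((2 * lam * n) ^ (-1 / alpha)) ^ alpha :=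
            Real.rpow_le_rpow (by positivity) hmle ha.le
          have h2 : ((2 * lam * (n : ℝ)) ^ (-1 / alpha)) ^ alpha = (2 * lam * (n : ℝ))⁻¹ := by
            rw [← Real.rpow_mul hc.le, div_mul_cancel₀ _ ha.ne', Real.rpow_neg_one]
          rw [h2] at h1
          calc 2 * lam * (n : ℝ) * (m : ℝ) ^ alpha
              ≤ 2 * lam * (n : ℝ) * (2 * lam * (n : ℝ))⁻¹ := by
                exact mul_le_mul_of_nonneg_left h1 hc.le
            _ = 1 := mul_inv_cancel₀ hc.ne'
        have hsm' : (s : ℝ) ≤ (m : ℝ) := by exact_mod_cast hlt.le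
        have h2b : 2 * b ≤ (s : ℝ) := by
          have hsplit : (s : ℝ) ^ (1 + alpha) = (s : ℝ) * (s : ℝ) ^ alpha := by
            rw [Real.rpow_add hsr, Real.rpow_one]
          have hsa : (s : ℝ) ^ alpha ≤ (m : ℝ) ^ alpha :=
            Real.rpow_le_rpow hsr.le hsm' ha.le
          have hb1 : b ≤ lam * ((s : ℝ) * (m : ℝ) ^ alpha) * (n : ℝ) := by
            rw [hbdef, hsplit]
            have h1 : lam * ((s : ℝ) * (s : ℝ) ^ alpha) ≤ lam * ((s : ℝ) * (m : ℝ) ^ alpha) := by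
              apply mul_le_mul_of_nonneg_left _ hlam.le
              exact mul_le_mul_of_nonneg_left hsa hsr.le
            have h2 : ((n : ℝ) - s) ≤ (n : ℝ) := by linarith
            have h3 : 0 ≤ lam * ((s : ℝ) * (s : ℝ) ^ alpha) := by positivity
            calc lam * ((s : ℝ) * (s : ℝ) ^ alpha) * ((n : ℝ) - s)
                ≤ lam * ((s : ℝ) * (s : ℝ) ^ alpha) * (n : ℝ) := by
                  apply mul_le_mul_of_nonneg_left h2 h3
              _ ≤ lam * ((s : ℝ) * (m : ℝ) ^ alpha) * (n : ℝ) := by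
                  apply mul_le_mul_of_nonneg_right h1 (by positivity)
          calc 2 * b ≤ 2 * (lam * ((s : ℝ) * (m : ℝ) ^ alpha) * (n : ℝ)) := by linarith
            _ = (s : ℝ) * (2 * lam * (n : ℝ) * (m : ℝ) ^ alpha) := by ring
            _ ≤ (s : ℝ) * 1 := mul_le_mul_of_nonneg_left hkey hsr.le
            _ = (s : ℝ) := mul_one _
        have hple : ENNReal.ofReal (b / (b + s)) ≤ ENNReal.ofReal (1 / 3) := by
          apply ENNReal.ofReal_le_ofReal
          rw [div_le_div_iff₀ hd (by norm_num)]
          linarith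
        have h42 : ENNReal.ofReal (b / (b + s)) * 4 + ENNReal.ofReal ((s : ℝ) / (b + s)) ≤ 2 := by
          have e3 : (3 : ℝ≥0∞) * ENNReal.ofReal (1 / 3) = 1 := by
            rw [show (3 : ℝ≥0∞) = ENNReal.ofReal 3 by norm_num,
              ← ENNReal.ofReal_mul (by norm_num)]
            norm_num
          calc ENNReal.ofReal (b / (b + s)) * 4 + ENNReal.ofReal ((s : ℝ) / (b + s))
              = 3 * ENNReal.ofReal (b / (b + s)) +
                (ENNReal.ofReal (b / (b + s)) + ENNReal.ofReal ((s : ℝ) / (b + s))) := by ring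
            _ = 3 * ENNReal.ofReal (b / (b + s)) + 1 := by rw [hsum]
            _ ≤ 3 * ENNReal.ofReal (1 / 3) + 1 := by
                exact add_le_add_left (mul_le_mul_right hple 3) 1
            _ = 2 := by rw [e3]; norm_num
        have e1 : (2 : ℝ≥0∞) ^ (s + 1) = 2 ^ (s - 1) * 4 := by
          rw [show s + 1 = (s - 1) + 2 by omega, pow_add]; norm_num
        have e2 : (2 : ℝ≥0∞) ^ s = 2 ^ (s - 1) * 2 := by
          rw [show s = (s - 1) + 1 by omega, pow_add]; norm_num
        calc ENNReal.ofReal (b / (b + s)) * 2 ^ (s + 1) +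
              ENNReal.ofReal ((s : ℝ) / (b + s)) * 2 ^ (s - 1)
            = (ENNReal.ofReal (b / (b + s)) * 4 + ENNReal.ofReal ((s : ℝ) / (b + s)))
              * 2 ^ (s - 1) := by rw [e1]; ring
          _ ≤ 2 * 2 ^ (s - 1) := mul_le_mul_left h42 _
          _ = 2 ^ s := by rw [e2]; ring
      · -- s > m : g constant nearby
        have hgt : m < s := lt_of_le_of_ne hge (fun h => hsm h.symm)
        have hmin1 : min (s + 1) m = m := by omega
        have hmin2 : min (s - 1) m = m := by omega
        have hmin3 : min s m = m := by omega
        rw [hmin1, hmin2, hmin3, ← add_mul, hsum, one_mul]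

/-- For super-linear scaling, the probability that the clique infection
chain started at 1 reaches m ≤ (2λn)^{-1/α} before 0 is at most 2^{1-m}. -/
theorem clique_superlinear_reach_upper (n m : ℕ) (lam alpha : ℝ)
    (hn : 1 ≤ n) (hm : 2 ≤ m) (hlam : 0 < lam) (ha : 0 < alpha)
    (hmle : (m : ℝ) ≤ (2 * lam * n) ^ (-1 / alpha)) :
    hitProb (cliqueStep n lam alpha) 1 {m} ≤
      ENNReal.ofReal ((2 : ℝ) ^ ((1 : ℝ) - m)) := by
  classical
  set g : ℕ → ℝ≥0∞ := fun I => (2 : ℝ≥0∞) ^ (min I m) with hg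
  have hsup := dist_superm (absorbStep {m} (cliqueStep n lam alpha)) g
    (step_superm n m lam alpha hn hm hlam ha hmle) 1
  have htarget : ENNReal.ofReal ((2 : ℝ) ^ ((1 : ℝ) - m)) = 2 / 2 ^ m := by
    rw [show ((2 : ℝ) ^ ((1 : ℝ) - m)) = 2 / (2 : ℝ) ^ (m : ℕ) by
      rw [Real.rpow_sub (by norm_num), Real.rpow_one, Real.rpow_natCast],
      ENNReal.ofReal_div_of_pos (by positivity), ENNReal.ofReal_pow (by norm_num)]
    norm_num
  rw [hitProb, htarget]
  apply iSup_le
  intro t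
  set d := markovDist (absorbStep {m} (cliqueStep n lam alpha)) 1 t with hd
  have h1 : ∑' s : ℕ, ({m} : Set ℕ).indicator d s = d m := by
    rw [tsum_eq_single m (by intro b hb; simp [Set.indicator, hb])]
    simp [Set.indicator]
  rw [h1]
  have h2 : d m * g m ≤ g 1 := le_trans (ENNReal.le_tsum m) (hsup t)
  have hgm : g m = 2 ^ m := by simp [hg]
  have hg1 : g 1 = 2 := by
    have : min 1 m = 1 := by omega
    simp [hg, this]
  rw [hgm, hg1] at h2
  rw [ENNReal.le_div_iff_mul_le (Or.inl (by positivity)) (Or.inl (by simp))]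
  exact h2
end

section
/- Let α > 0, let n ≥ 2 be an integer, and let λ > 0 with λn ≤ 1. Let m ≥ 1 be an integer with m ≤ n/2 and m ≤ (λn/2)^{−1/α}. Then for the clique infection chain on {0,…,n} started at X₀ = 1, the probability that the chain reaches the state m before reaching the state 0 is at least (λn/2)^m. -/
open scoped ENNReal
open Filter Asymptotics

section Generic
variable (step : ℕ → ℕ → ℝ≥0∞)

lemma markovDist_zero' (s0 J : ℕ) :
    markovDist step s0 0 J = if J = s0 then 1 else 0 := rfl

lemma markovDist_succ' (s0 t J : ℕ) :
    markovDist step s0 (t+1) J = ∑' s, markovDist step s0 t s * step s J := rfl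

lemma markovDist_backward (s0 t J : ℕ) :
    markovDist step s0 (t+1) J = ∑' s, step s0 s * markovDist step s t J := by
  induction t generalizing J with
  | zero =>
    rw [markovDist_succ']
    rw [tsum_eq_single s0 (by intro b hb; simp [markovDist_zero', hb])]
    rw [tsum_eq_single J (by intro b hb; simp [markovDist_zero', Ne.symm hb])]
    simp [markovDist_zero']
  | succ t ih =>
    rw [markovDist_succ']
    simp_rw [ih]
    simp_rw [← ENNReal.tsum_mul_right]
    rw [ENNReal.tsum_comm]
    simp_rw [mul_assoc, ENNReal.tsum_mul_left]
    rfl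

lemma markov_mass (h : ∀ s, ∑' J, step s J = 1) (s0 t : ℕ) :
    ∑' J, markovDist step s0 t J = 1 := by
  induction t with
  | zero =>
    rw [tsum_eq_single s0 (by intro b hb; simp [markovDist_zero', hb])]
    simp [markovDist_zero']
  | succ t ih =>
    simp_rw [markovDist_succ']
    rw [ENNReal.tsum_comm]
    simp_rw [ENNReal.tsum_mul_left, h, mul_one]
    exact ih

lemma markov_abs_mono (m : ℕ) (h : step m m = 1) (s0 : ℕ) :
    Monotone fun t => markovDist step s0 t m := by
  apply monotone_nat_of_le_succ
  intro t
  calc markovDist step s0 t m = markovDist step s0 t m * step m m := by rw [h, mul_one]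
  _ ≤ ∑' s, markovDist step s0 t s * step s m := ENNReal.le_tsum m
  _ = markovDist step s0 (t+1) m := (markovDist_succ' step s0 t m).symm

lemma markov_stay (z : ℕ) (h : ∀ J, step z J = if J = z then 1 else 0) (t J : ℕ) :
    markovDist step z t J = if J = z then 1 else 0 := by
  induction t generalizing J with
  | zero => rfl
  | succ t ih =>
    rw [markovDist_succ']
    rw [tsum_eq_single z (by intro b hb; simp [ih, hb])]
    simp [ih, h]

lemma hitProb_singleton (s0 m : ℕ) :
    hitProb step s0 {m} = ⨆ t, markovDist (absorbStep {m} step) s0 t m := by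
  unfold hitProb
  congr 1; funext t
  rw [tsum_eq_single m (by
    intro b hb
    exact Set.indicator_of_notMem (by simpa using hb) _)]
  simp

end Generic

lemma min_principle (m : ℕ) (hm : 1 ≤ m) (f p q : ℕ → ℝ)
    (hpq : ∀ I, 1 ≤ I → I < m → p I + q I = 1)
    (hp : ∀ I, 1 ≤ I → I < m → 0 ≤ p I)
    (hq : ∀ I, 1 ≤ I → I < m → 0 < q I)
    (hsup : ∀ I, 1 ≤ I → I < m → p I * f (I+1) + q I * f (I-1) ≤ f I)
    (h0 : 0 ≤ f 0) (hm0 : 0 ≤ f m) : 0 ≤ f 1 := by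
  by_contra hneg
  push_neg at hneg
  have key : ∀ I, 1 ≤ I → I ≤ m → f I < 0 ∧ f I - f (I-1) < 0 := by
    intro I
    induction I with
    | zero => omega
    | succ I ih =>
      intro _ hle
      rcases Nat.eq_zero_or_pos I with h0I | h1I
      · subst h0I
        exact ⟨hneg, by simpa using sub_neg.mpr (lt_of_lt_of_le hneg h0)⟩
      · have hIm : I < m := by omega
        obtain ⟨hfI, hd⟩ := ih h1I (by omega)
        have hs := hsup I h1I hIm
        have hpq' := hpq I h1I hIm
        have hp' := hp I h1I hIm
        have hq' := hq I h1I hIm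
        -- p I * (f (I+1) - f I) ≤ q I * (f I - f (I-1)) < 0
        have h1 : p I * (f (I+1) - f I) ≤ q I * (f I - f (I-1)) := by nlinarith
        have h2 : q I * (f I - f (I-1)) < 0 := mul_neg_of_pos_of_neg hq' hd
        have h3 : f (I+1) - f I < 0 := by
          by_contra hge
          push_neg at hge
          nlinarith
        have : (I + 1) - 1 = I := by omega
        rw [this]
        constructor
        · linarith
        · linarith
  exact absurd (key m hm le_rfl).1 (not_lt.mpr hm0)

/-- For super-linear scaling with λn ≤ 1, the probability that the clique
infection chain started at 1 reaches m before 0 is at least (λn/2)^m. -/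
theorem clique_superlinear_reach_lower (n m : ℕ) (lam alpha : ℝ)
    (hn : 2 ≤ n) (hm : 1 ≤ m) (hlam : 0 < lam) (hln : lam * n ≤ 1) (ha : 0 < alpha)
    (hm1 : (m : ℝ) ≤ (n : ℝ) / 2) (hm2 : (m : ℝ) ≤ (lam * n / 2) ^ (-1 / alpha)) :
    ENNReal.ofReal ((lam * n / 2) ^ m) ≤ hitProb (cliqueStep n lam alpha) 1 {m} := by
  classical
  have hn0 : (0:ℝ) < n := by positivity
  set c : ℝ := lam * (n:ℝ) / 2 with hc
  have hcpos : 0 < c := by positivity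
  have hchalf : c ≤ 1/2 := by rw [hc]; linarith
  have hmn : 2 * m ≤ n := by
    have : ((2*m : ℕ):ℝ) ≤ (n:ℝ) := by push_cast; linarith
    exact_mod_cast this
  set step := cliqueStep n lam alpha with hstep
  set σ := absorbStep {m} step with hσ
  -- basic descriptions of σ
  have hσm : ∀ J, σ m J = if J = m then 1 else 0 := by
    intro J; simp [hσ, absorbStep]
  have hσmm : σ m m = 1 := by simp [hσm]
  -- real transition quantities
  set B : ℕ → ℝ := fun I => lam * (I : ℝ) ^ (1 + alpha) * ((n : ℝ) - I) with hB
  set pr : ℕ → ℝ := fun I => B I / (B I + I) with hpr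
  set qr : ℕ → ℝ := fun I => (I : ℝ) / (B I + I) with hqr
  have hBnonneg : ∀ I : ℕ, I ≤ n → 0 ≤ B I := by
    intro I hI
    have h1 : (0:ℝ) ≤ (I:ℝ) ^ (1+alpha) := Real.rpow_nonneg (Nat.cast_nonneg I) _
    have h2 : (I:ℝ) ≤ n := by exact_mod_cast hI
    have : (0:ℝ) ≤ (n:ℝ) - I := by linarith
    rw [hB]
    positivity
  have hDpos : ∀ I : ℕ, 1 ≤ I → I ≤ n → 0 < B I + I := by
    intro I h1 h2
    have := hBnonneg I h2
    have : (1:ℝ) ≤ (I:ℝ) := by exact_mod_cast h1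
    linarith [hBnonneg I h2]
  -- interior transition values of σ
  have hσup : ∀ I, 1 ≤ I → I < m → σ I (I+1) = ENNReal.ofReal (pr I) := by
    intro I h1 h2
    have hIm : I ≠ m := by omega
    have hIn : ¬ (I = 0 ∨ n < I) := by omega
    simp only [hσ, absorbStep, Set.mem_singleton_iff, if_neg hIm, hstep, cliqueStep,
      if_neg hIn, if_pos rfl, if_true]
    rfl
  have hσdown : ∀ I, 1 ≤ I → I < m → σ I (I-1) = ENNReal.ofReal (qr I) := by
    intro I h1 h2
    have hIm : I ≠ m := by omega
    have hIn : ¬ (I = 0 ∨ n < I) := by omega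
    have hne : ¬ (I - 1 = I + 1) := by omega
    simp only [hσ, absorbStep, Set.mem_singleton_iff, if_neg hIm, hstep, cliqueStep,
      if_neg hIn, if_neg hne, if_pos rfl, if_true]
    rfl
  -- row sums of σ are 1
  have hrow : ∀ s, ∑' J, σ s J = 1 := by
    intro s
    by_cases hsm : s = m
    · subst hsm
      rw [tsum_eq_single s (by intro b hb; simp [hσm, hb])]
      simp [hσm]
    · have hσs : ∀ J, σ s J = step s J := by
        intro J; simp [hσ, absorbStep, hsm]
      by_cases hdeg : s = 0 ∨ n < s
      · simp only [hσs, hstep, cliqueStep, if_pos hdeg]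
        rw [tsum_eq_single s (by intro b hb; simp [hb])]
        simp
      · push_neg at hdeg
        have hs1 : 1 ≤ s := Nat.one_le_iff_ne_zero.mpr hdeg.1
        have hsn : s ≤ n := hdeg.2
        have hstepval : ∀ J, σ s J =
            (if J = s + 1 then ENNReal.ofReal (pr s)
             else if J = s - 1 then ENNReal.ofReal (qr s) else 0) := by
          intro J
          simp only [hσs, hstep, cliqueStep, if_neg (show ¬ (s = 0 ∨ n < s) by omega)]
          rfl
        simp only [hstepval]
        rw [tsum_eq_sum (s := {s+1, s-1}) (by
          intro b hb
          simp only [Finset.mem_insert, Finset.mem_singleton, not_or] at hb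
          rw [if_neg hb.1, if_neg hb.2])]
        rw [Finset.sum_insert (by simp; omega), Finset.sum_singleton]
        rw [if_pos rfl, if_neg (by omega), if_pos rfl]
        rw [← ENNReal.ofReal_add (by
            have := hDpos s hs1 hsn
            have := hBnonneg s hsn
            positivity)
          (by
            have := hDpos s hs1 hsn
            positivity)]
        rw [hpr, hqr]
        simp only []
        rw [← add_div, div_self (ne_of_gt (hDpos s hs1 hsn))]
        simp
  -- hitting quantities
  have hH : ∀ s, hitProb step s {m} = ⨆ t, markovDist σ s t m := by
    intro s; rw [hitProb_singleton, hσ]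
  have hmono : ∀ s, Monotone (fun t => markovDist σ s t m) :=
    fun s => markov_abs_mono σ m hσmm s
  have hDle1 : ∀ s t, markovDist σ s t m ≤ 1 := by
    intro s t
    calc markovDist σ s t m ≤ ∑' J, markovDist σ s t J := ENNReal.le_tsum m
    _ = 1 := markov_mass σ hrow s t
  have hHle1 : ∀ s, hitProb step s {m} ≤ 1 := by
    intro s; rw [hH]; exact iSup_le (hDle1 s)
  have hHne : ∀ s, hitProb step s {m} ≠ ⊤ :=
    fun s => ne_top_of_le_ne_top ENNReal.one_ne_top (hHle1 s)
  have hHm : hitProb step m {m} = 1 := by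
    apply le_antisymm (hHle1 m)
    rw [hH]
    have h0 : markovDist σ m 0 m = 1 := by simp [markovDist_zero']
    calc (1:ℝ≥0∞) = markovDist σ m 0 m := h0.symm
    _ ≤ ⨆ t, markovDist σ m t m := le_iSup (fun t => markovDist σ m t m) 0
  have hH0 : hitProb step 0 {m} = 0 := by
    rw [hH]
    have hid : ∀ J, σ 0 J = if J = 0 then 1 else 0 := by
      intro J
      have h01 : σ 0 J = step 0 J := by
        simp [hσ, absorbStep, show (0:ℕ) ≠ m by omega]
      rw [h01, hstep]
      unfold cliqueStep
      rw [if_pos (Or.inl rfl)]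
    simp [markov_stay σ 0 hid, show m ≠ 0 by omega]
  -- key recursion inequality
  have hkey : ∀ I, 1 ≤ I → I < m →
      ENNReal.ofReal (pr I) * hitProb step (I+1) {m}
        + ENNReal.ofReal (qr I) * hitProb step (I-1) {m} ≤ hitProb step I {m} := by
    intro I h1 h2
    rw [hH, hH, hH, ← hσup I h1 h2, ← hσdown I h1 h2, ENNReal.mul_iSup, ENNReal.mul_iSup]
    apply ENNReal.iSup_add_iSup_le
    intro t1 t2
    set t := max t1 t2 with ht
    calc σ I (I+1) * markovDist σ (I+1) t1 m + σ I (I-1) * markovDist σ (I-1) t2 m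
        ≤ σ I (I+1) * markovDist σ (I+1) t m + σ I (I-1) * markovDist σ (I-1) t m := by
          gcongr
          · exact hmono _ (le_max_left _ _)
          · exact hmono _ (le_max_right _ _)
      _ = ∑ s ∈ ({I+1, I-1} : Finset ℕ), σ I s * markovDist σ s t m := by
          rw [Finset.sum_insert (by simp; omega), Finset.sum_singleton]
      _ ≤ ∑' s, σ I s * markovDist σ s t m := ENNReal.sum_le_tsum _
      _ = markovDist σ I (t+1) m := (markovDist_backward σ I t m).symm
      _ ≤ ⨆ t', markovDist σ I t' m := le_iSup (fun t' => markovDist σ I t' m) (t+1)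
  -- pass to reals
  set Hr : ℕ → ℝ := fun s => (hitProb step s {m}).toReal with hHr
  have hprnn : ∀ I, 1 ≤ I → I < m → 0 ≤ pr I := by
    intro I h1 h2
    have hIn : I ≤ n := by omega
    exact div_nonneg (hBnonneg I hIn) (hDpos I h1 hIn).le
  have hqrnn : ∀ I, 1 ≤ I → I < m → 0 ≤ qr I := by
    intro I h1 h2
    have hIn : I ≤ n := by omega
    exact div_nonneg (by positivity) (hDpos I h1 hIn).le
  have hkeyr : ∀ I, 1 ≤ I → I < m → pr I * Hr (I+1) + qr I * Hr (I-1) ≤ Hr I := by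
    intro I h1 h2
    have h := ENNReal.toReal_mono (hHne I) (hkey I h1 h2)
    rw [ENNReal.toReal_add (ENNReal.mul_ne_top ENNReal.ofReal_ne_top (hHne _))
        (ENNReal.mul_ne_top ENNReal.ofReal_ne_top (hHne _)),
      ENNReal.toReal_mul, ENNReal.toReal_mul,
      ENNReal.toReal_ofReal (hprnn I h1 h2), ENNReal.toReal_ofReal (hqrnn I h1 h2)] at h
    exact h
  have hpq1 : ∀ I, 1 ≤ I → I < m → pr I + qr I = 1 := by
    intro I h1 h2
    have hIn : I ≤ n := by omega
    rw [hpr, hqr]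
    simp only []
    rw [← add_div, div_self (ne_of_gt (hDpos I h1 hIn))]
  have hqrpos : ∀ I, 1 ≤ I → I < m → 0 < qr I := by
    intro I h1 h2
    have hIn : I ≤ n := by omega
    have hI : (0:ℝ) < I := by exact_mod_cast h1
    exact div_pos hI (hDpos I h1 hIn)
  -- the subharmonic comparison function
  set g : ℕ → ℝ := fun I => c ^ (m - I) - c ^ m with hg
  have hBlb : ∀ I : ℕ, 1 ≤ I → I < m → (I:ℝ) * c ≤ B I := by
    intro I h1 h2
    have hI1 : (1:ℝ) ≤ (I:ℝ) := by exact_mod_cast h1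
    have hrp : (I:ℝ) ^ (1:ℝ) ≤ (I:ℝ) ^ (1 + alpha) :=
      Real.rpow_le_rpow_of_exponent_le hI1 (by linarith)
    rw [Real.rpow_one] at hrp
    have hIub : (I:ℝ) ≤ (m:ℝ) - 1 := by
      have : (I:ℝ) + 1 ≤ (m:ℝ) := by exact_mod_cast h2
      linarith
    have hnI : (n:ℝ)/2 ≤ (n:ℝ) - I := by linarith
    rw [hB, hc]
    simp only []
    calc (I:ℝ) * (lam * n / 2) = lam * (I:ℝ) * ((n:ℝ)/2) := by ring
    _ ≤ lam * (I:ℝ)^(1+alpha) * ((n:ℝ) - I) := by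
        apply mul_le_mul
        · exact mul_le_mul_of_nonneg_left hrp hlam.le
        · exact hnI
        · positivity
        · positivity
  have hsubg : ∀ I, 1 ≤ I → I < m → g I ≤ pr I * g (I+1) + qr I * g (I-1) := by
    intro I h1 h2
    have hIn : I ≤ n := by omega
    have hD := hDpos I h1 hIn
    have hBI := hBnonneg I hIn
    set j : ℕ := m - I - 1 with hj
    have e1 : m - I = j + 1 := by omega
    have e2 : m - (I+1) = j := by omega
    have e3 : m - (I-1) = j + 2 := by omega
    have key2 : (B I + I) * g I ≤ B I * g (I+1) + (I:ℝ) * g (I-1) := by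
      rw [hg]
      simp only []
      rw [e1, e2, e3]
      have hid : B I * (c^j - c^m) + (I:ℝ) * (c^(j+2) - c^m)
          - (B I + I) * (c^(j+1) - c^m)
          = c^j * (1 - c) * (B I - (I:ℝ) * c) := by ring
      have hnn : 0 ≤ c^j * (1 - c) * (B I - (I:ℝ) * c) := by
        apply mul_nonneg
        apply mul_nonneg
        · positivity
        · linarith
        · linarith [hBlb I h1 h2]
      linarith [hid ▸ hnn]
    rw [hpr, hqr]
    simp only []
    rw [div_mul_eq_mul_div, div_mul_eq_mul_div, ← add_div, le_div_iff₀ hD]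
    linarith [key2]
  -- apply the minimum principle to Hr - g
  have hfin := min_principle m hm (fun I => Hr I - g I) pr qr hpq1
    (fun I h1 h2 => hprnn I h1 h2) hqrpos
    (by
      intro I h1 h2
      have e1 := hkeyr I h1 h2
      have e2 := hsubg I h1 h2
      show pr I * (Hr (I+1) - g (I+1)) + qr I * (Hr (I-1) - g (I-1)) ≤ Hr I - g I
      nlinarith [e1, e2])
    (by
      have hHr0 : Hr 0 = 0 := by simp [hHr, hH0]
      have hg0 : g 0 = 0 := by
        show c ^ (m - 0) - c ^ m = 0
        rw [Nat.sub_zero, sub_self]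
      show (0:ℝ) ≤ Hr 0 - g 0
      rw [hHr0, hg0]; norm_num)
    (by
      have hHrm : Hr m = 1 := by simp [hHr, hHm]
      have hgm : g m = 1 - c ^ m := by
        show c ^ (m - m) - c ^ m = 1 - c ^ m
        rw [Nat.sub_self, pow_zero]
      show (0:ℝ) ≤ Hr m - g m
      rw [hHrm, hgm]
      have : (0:ℝ) ≤ c ^ m := by positivity
      linarith)
  have hg1 : g 1 = c ^ (m-1) - c ^ m := rfl
  have hcm : c ^ m ≤ Hr 1 := by
    have h1 : c ^ m = c ^ (m-1) * c := by
      rw [← pow_succ]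
      congr 1
      omega
    have h2 : c ^ (m-1) * c ≤ c ^ (m-1) * (1/2) := by
      apply mul_le_mul_of_nonneg_left hchalf (by positivity)
    have h3 : 0 ≤ Hr 1 - g 1 := hfin
    rw [hg1] at h3
    nlinarith [pow_nonneg hcpos.le (m-1)]
  calc ENNReal.ofReal (c ^ m) ≤ ENNReal.ofReal (Hr 1) := ENNReal.ofReal_le_ofReal hcm
  _ = hitProb step 1 {m} := ENNReal.ofReal_toReal (hHne 1)
end
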